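/- arXiv:1812.00146 — 3 statements merged into one kernel-verified Lean document; each statement's English description precedes it below -/
import Mathlib

section
/- Let μ, β ∈ (0,∞) and θ ∈ (0,2), and suppose that none of the following four conditions holds: (a) μβ − μ + β < 0 and θ ≤ 2(β+1)(μ−β−μβ)/(μ+μβ−β−β²−2μβ²); (b) μβ − μ − β > 0 and θ ≤ 2(μ²+β²+μβ+μ+β−μ²β²)/(μ²+β²+μ²β+μβ²+μ+β−2μ²β²); (c) θ ≥ 2(μβ+μ+β)/(2μβ+μ+β); (d) μβ + μ − β < 0 and θ ≤ 2(μ+1)(β−μ−μβ)/(β+μβ−μ−μ²−2μ²β). Define K_num = ((2−θ)μ(μ+1) + β(μ−1)(2−θ+2μ(1−θ)))·((2−θ)μ + β(2(1−θ)μ−θ+2)) and K_den = β²(θ−2)μ(2β(θ−2)−θ−2) + β²(2β+1)(θ−2)² + (2β−1)μ³(2β(θ−1)+θ−2)² − (2β−1)μ²(2β−θ+2)(2β(θ−1)+θ−2). Then K_den > 0, K_num > 0, and the quantity K = K_num/K_den satisfies 0 < K < 1/β². -/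
set_option maxHeartbeats 1000000

/-- In case (e) of the tight DRS contraction factor (with `A ∈ M_μ`, `B ∈ C_β`),
the quantity `K = K_num / K_den` used for the worst-case construction satisfies
`K_den > 0`, `K_num > 0` and `0 < K < 1/β²`. -/
theorem DRS_case_e_K_bounds (μ β θ : ℝ) (hμ : 0 < μ) (hβ : 0 < β)
    (hθ₀ : 0 < θ) (hθ₂ : θ < 2)
    (ha : ¬(μ * β - μ + β < 0 ∧
      θ ≤ 2 * (β + 1) * (μ - β - μ * β) / (μ + μ * β - β - β ^ 2 - 2 * μ * β ^ 2)))
    (hb : ¬(μ * β - μ - β > 0 ∧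
      θ ≤ 2 * (μ ^ 2 + β ^ 2 + μ * β + μ + β - μ ^ 2 * β ^ 2) /
        (μ ^ 2 + β ^ 2 + μ ^ 2 * β + μ * β ^ 2 + μ + β - 2 * μ ^ 2 * β ^ 2)))
    (hc : ¬(θ ≥ 2 * (μ * β + μ + β) / (2 * μ * β + μ + β)))
    (hd : ¬(μ * β + μ - β < 0 ∧
      θ ≤ 2 * (μ + 1) * (β - μ - μ * β) / (β + μ * β - μ - μ ^ 2 - 2 * μ ^ 2 * β)))
    (Knum Kden : ℝ)
    (hKnum : Knum = ((2 - θ) * μ * (μ + 1) + β * (μ - 1) * (2 - θ + 2 * μ * (1 - θ))) *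
      ((2 - θ) * μ + β * (2 * (1 - θ) * μ - θ + 2)))
    (hKden : Kden = β ^ 2 * (θ - 2) * μ * (2 * β * (θ - 2) - θ - 2) +
      β ^ 2 * (2 * β + 1) * (θ - 2) ^ 2 +
      (2 * β - 1) * μ ^ 3 * (2 * β * (θ - 1) + θ - 2) ^ 2 -
      (2 * β - 1) * μ ^ 2 * (2 * β - θ + 2) * (2 * β * (θ - 1) + θ - 2)) :
    0 < Kden ∧ 0 < Knum ∧ 0 < Knum / Kden ∧ Knum / Kden < 1 / β ^ 2 := by
  have hβ2 : (0:ℝ) < β ^ 2 := by positivity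
  -- condition (c): C > 0
  have hcden : (0:ℝ) < 2 * μ * β + μ + β := by positivity
  push_neg at hc
  have hC : θ * (2 * μ * β + μ + β) < 2 * (μ * β + μ + β) :=
    (lt_div_iff₀ hcden).mp hc
  -- F1 > 0 (via ¬(d))
  have hF1 : 0 < (2 - θ) * μ * (μ + 1) + β * (μ - 1) * (2 - θ + 2 * μ * (1 - θ)) := by
    rcases lt_or_ge (μ * β + μ - β) 0 with hPd | hPd
    · have h2 := (not_and.mp hd) hPd
      push_neg at h2
      have hDd : 0 < β + μ * β - μ - μ ^ 2 - 2 * μ ^ 2 * β := by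
        have hμ1 : μ < 1 := by nlinarith [mul_pos hμ hβ]
        nlinarith [mul_pos hμ hβ, mul_pos (mul_pos hμ hβ) (sub_pos.mpr hμ1)]
      have h3 := (div_lt_iff₀ hDd).mp h2
      have hg : (2 - θ) * μ * (μ + 1) + β * (μ - 1) * (2 - θ + 2 * μ * (1 - θ))
          = θ * (β + μ * β - μ - μ ^ 2 - 2 * μ ^ 2 * β) - 2 * (μ + 1) * (β - μ - μ * β) := by
        ring
      rw [hg]; linarith
    · nlinarith [mul_pos hμ hβ, sq_nonneg (μ-1), mul_nonneg hPd hθ₀.le,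
        mul_nonneg hPd hμ.le, mul_nonneg hPd hβ.le, mul_pos hμ hμ,
        mul_nonneg (mul_nonneg hPd hμ.le) hθ₀.le, mul_pos (mul_pos hμ hβ) hθ₀,
        mul_nonneg hPd (sub_nonneg.mpr hθ₂.le), mul_pos hμ hθ₀]
  -- G1 > 0 (via ¬(a)), symmetric in μ ↔ β
  have hG1 : 0 < (2 - θ) * β * (β + 1) + μ * (β - 1) * (2 - θ + 2 * β * (1 - θ)) := by
    rcases lt_or_ge (μ * β - μ + β) 0 with hPa | hPa
    · have h2 := (not_and.mp ha) hPa
      push_neg at h2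
      have hDa : 0 < μ + μ * β - β - β ^ 2 - 2 * μ * β ^ 2 := by
        have hβ1 : β < 1 := by nlinarith [mul_pos hμ hβ]
        nlinarith [mul_pos hμ hβ, mul_pos (mul_pos hμ hβ) (sub_pos.mpr hβ1)]
      have h3 := (div_lt_iff₀ hDa).mp h2
      have hg : (2 - θ) * β * (β + 1) + μ * (β - 1) * (2 - θ + 2 * β * (1 - θ))
          = θ * (μ + μ * β - β - β ^ 2 - 2 * μ * β ^ 2) - 2 * (β + 1) * (μ - β - μ * β) := by
        ring
      rw [hg]; linarith
    · nlinarith [mul_pos hμ hβ, sq_nonneg (β-1), mul_nonneg hPa hθ₀.le,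
        mul_nonneg hPa hβ.le, mul_nonneg hPa hμ.le, mul_pos hβ hβ,
        mul_nonneg (mul_nonneg hPa hβ.le) hθ₀.le, mul_pos (mul_pos hμ hβ) hθ₀,
        mul_nonneg hPa (sub_nonneg.mpr hθ₂.le), mul_pos hβ hθ₀]
  -- E > 0 (via ¬(b))
  have hE : 0 < 2 * (μ ^ 2 + β ^ 2 + μ * β + μ + β - μ ^ 2 * β ^ 2) -
      θ * (μ ^ 2 + β ^ 2 + μ ^ 2 * β + μ * β ^ 2 + μ + β - 2 * μ ^ 2 * β ^ 2) := by
    rcases lt_or_ge 0 (μ * β - μ - β) with hPb | hPb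
    · have h2 := (not_and.mp hb) hPb
      push_neg at h2
      have hDb : μ ^ 2 + β ^ 2 + μ ^ 2 * β + μ * β ^ 2 + μ + β - 2 * μ ^ 2 * β ^ 2 < 0 := by
        nlinarith [mul_pos hμ hβ, sq_nonneg (μ + β), mul_pos (mul_pos hμ hβ) (mul_pos hμ hβ),
          mul_pos (mul_pos hμ hβ) hPb, mul_pos (add_pos hμ hβ) hPb]
      have h3 := (div_lt_iff_of_neg hDb).mp h2
      linarith
    · nlinarith [mul_pos hμ hβ, sq_nonneg (μ-β), sq_nonneg (μ*β-μ-β),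
        mul_nonneg (neg_nonneg.mpr hPb) hθ₀.le,
        mul_nonneg (neg_nonneg.mpr hPb) (mul_pos hμ hβ).le,
        mul_pos (mul_pos hμ hβ) hθ₀,
        mul_nonneg (neg_nonneg.mpr hPb) (sub_nonneg.mpr hθ₂.le),
        sq_nonneg (μ-1), sq_nonneg (β-1)]
  -- second factor of Knum equals the (c)-expression
  have hC' : 0 < (2 - θ) * μ + β * (2 * (1 - θ) * μ - θ + 2) := by
    have h : (2 - θ) * μ + β * (2 * (1 - θ) * μ - θ + 2)
        = 2 * (μ * β + μ + β) - θ * (2 * μ * β + μ + β) := by ring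
    rw [h]; linarith
  have hKnum_pos : 0 < Knum := by
    rw [hKnum]; exact mul_pos hF1 hC'
  -- key identity: Kden - β² Knum = G1 * E
  have hid : Kden - β ^ 2 * Knum =
      ((2 - θ) * β * (β + 1) + μ * (β - 1) * (2 - θ + 2 * β * (1 - θ))) *
      (2 * (μ ^ 2 + β ^ 2 + μ * β + μ + β - μ ^ 2 * β ^ 2) -
        θ * (μ ^ 2 + β ^ 2 + μ ^ 2 * β + μ * β ^ 2 + μ + β - 2 * μ ^ 2 * β ^ 2)) := by
    rw [hKnum, hKden]; ring
  have hdiff : 0 < Kden - β ^ 2 * Knum := hid ▸ mul_pos hG1 hE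
  have hKden_pos : 0 < Kden := by linarith [mul_pos hβ2 hKnum_pos]
  refine ⟨hKden_pos, hKnum_pos, div_pos hKnum_pos hKden_pos, ?_⟩
  rw [div_lt_div_iff₀ hKden_pos hβ2]
  linarith [hdiff]
end

section
/- Let μ, L ∈ (0,∞) and θ ∈ (0,2). Define the real 2×2 matrix T = [[1 − θ/(L²+1), Lθ/(L²+1)], [−Lθ(μ−1)/((L²+1)(μ+1)), ((μ+1−θ)L² − θμ + μ + 1)/((L²+1)(μ+1))]] and set C = √(((2(θ−1)μ+θ−2)² + L²(θ−2(μ+1))²)/(L²+1)). Then the eigenvalues of TᵀT are ((θ+C)/(2(μ+1)))² and ((θ−C)/(2(μ+1)))²; in particular, the operator norm of T as a linear map on Euclidean ℝ² equals (θ+C)/(2(μ+1)). -/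
open Matrix
set_option maxHeartbeats 1000000

lemma mulT_aux (a b c d : ℝ) :
    (!![a, b; c, d])ᵀ * !![a, b; c, d] =
      !![a^2 + c^2, a*b + c*d; a*b + c*d, b^2 + d^2] := by
  have ht : (!![a, b; c, d])ᵀ = !![a, c; b, d] := by
    ext i j; fin_cases i <;> fin_cases j <;> simp
  rw [ht, Matrix.mul_fin_two]
  congr 1 <;> ring_nf

lemma spec2_aux (A B C D x : ℝ) :
    x ∈ spectrum ℝ !![A, B; C, D] ↔ (x - A) * (x - D) - B * C = 0 := by
  rw [spectrum.mem_iff, ← not_iff_not, not_not, Matrix.isUnit_iff_isUnit_det,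
    isUnit_iff_ne_zero]
  have h : algebraMap ℝ (Matrix (Fin 2) (Fin 2) ℝ) x - !![A, B; C, D] =
      !![x - A, -B; -C, x - D] := by
    ext i j
    fin_cases i <;> fin_cases j <;>
      simp [Matrix.algebraMap_matrix_apply]
  rw [h, Matrix.det_fin_two_of]
  constructor
  · intro h'; intro h''; exact h' (by linarith [h''] )
  · intro h' h''; exact h' (by linarith)

lemma quad_aux (p q B x y : ℝ) (hp : 0 ≤ p) (hq : 0 ≤ q) (h : p * q = B^2) :
    2 * B * x * y ≤ p * x^2 + q * y^2 := by
  rcases eq_or_lt_of_le hp with hp0 | hp0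
  · have hB : B = 0 := by nlinarith
    subst hB; nlinarith
  · nlinarith [sq_nonneg (p * x - B * y)]

lemma pos_aux (p q B : ℝ) (hsum : 0 ≤ p + q) (hprod : p * q = B^2) : 0 ≤ p ∧ 0 ≤ q := by
  constructor <;> nlinarith [sq_nonneg B]

lemma clm_apply_aux (M : Matrix (Fin 2) (Fin 2) ℝ) (x : EuclideanSpace ℝ (Fin 2)) (i : Fin 2) :
    (Matrix.toEuclideanCLM (𝕜 := ℝ) M x) i = M i 0 * x 0 + M i 1 * x 1 := by
  have h := Matrix.ofLp_toEuclideanCLM (𝕜 := ℝ) M x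
  have h2 := congrFun h i
  simpa [Matrix.mulVec, dotProduct, Fin.sum_univ_two] using h2

lemma norm_sq_aux (x : EuclideanSpace ℝ (Fin 2)) : ‖x‖ = Real.sqrt ((x 0)^2 + (x 1)^2) := by
  rw [EuclideanSpace.norm_eq]
  simp [Fin.sum_univ_two, Real.norm_eq_abs, sq_abs]

/-- The worst-case Douglas–Rachford operator for case (a) with `A ∈ M_μ`,
`B ∈ M ∩ L_L`: the eigenvalues of `TᵀT` are `((θ±C)/(2(μ+1)))²` and the operator norm
of `T` on Euclidean `ℝ²` is `(θ+C)/(2(μ+1))`. -/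
theorem DRS_lipschitz_case_a_lower_bound_matrix (μ L θ : ℝ)
    (hμ : 0 < μ) (hL : 0 < L) (hθ₀ : 0 < θ) (hθ₂ : θ < 2)
    (T : Matrix (Fin 2) (Fin 2) ℝ)
    (hT : T = !![1 - θ / (L ^ 2 + 1), L * θ / (L ^ 2 + 1);
      -(L * θ * (μ - 1)) / ((L ^ 2 + 1) * (μ + 1)),
      ((μ + 1 - θ) * L ^ 2 - θ * μ + μ + 1) / ((L ^ 2 + 1) * (μ + 1))])
    (C : ℝ)
    (hC : C = Real.sqrt (((2 * (θ - 1) * μ + θ - 2) ^ 2 +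
      L ^ 2 * (θ - 2 * (μ + 1)) ^ 2) / (L ^ 2 + 1))) :
    spectrum ℝ (Tᵀ * T) =
      {((θ + C) / (2 * (μ + 1))) ^ 2, ((θ - C) / (2 * (μ + 1))) ^ 2} ∧
    ‖Matrix.toEuclideanCLM (𝕜 := ℝ) T‖ = (θ + C) / (2 * (μ + 1)) := by
  have hD : (0:ℝ) < L ^ 2 + 1 := by positivity
  have hM : (0:ℝ) < μ + 1 := by linarith
  have hE : (0:ℝ) ≤ ((2 * (θ - 1) * μ + θ - 2) ^ 2 +
      L ^ 2 * (θ - 2 * (μ + 1)) ^ 2) / (L ^ 2 + 1) := by positivity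
  have hC0 : 0 ≤ C := hC ▸ Real.sqrt_nonneg _
  have hC2 : C ^ 2 = ((2 * (θ - 1) * μ + θ - 2) ^ 2 +
      L ^ 2 * (θ - 2 * (μ + 1)) ^ 2) / (L ^ 2 + 1) := by
    rw [hC, Real.sq_sqrt hE]
  -- entries
  set a : ℝ := 1 - θ / (L ^ 2 + 1) with ha
  set b : ℝ := L * θ / (L ^ 2 + 1) with hb
  set c : ℝ := -(L * θ * (μ - 1)) / ((L ^ 2 + 1) * (μ + 1)) with hc
  set d : ℝ := ((μ + 1 - θ) * L ^ 2 - θ * μ + μ + 1) / ((L ^ 2 + 1) * (μ + 1)) with hd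
  set l₁ : ℝ := ((θ + C) / (2 * (μ + 1))) ^ 2 with hl₁
  set l₂ : ℝ := ((θ - C) / (2 * (μ + 1))) ^ 2 with hl₂
  set A : ℝ := a ^ 2 + c ^ 2 with hA
  set Dd : ℝ := b ^ 2 + d ^ 2 with hDd
  set B : ℝ := a * b + c * d with hB
  clear_value a b c d l₁ l₂ A Dd B
  have hS : Tᵀ * T = !![A, B; B, Dd] := by rw [hT, mulT_aux a b c d, hA, hB, hDd]
  -- trace identity
  have htr : l₁ + l₂ = A + Dd := by
    have h1 : l₁ + l₂ = (θ ^ 2 + C ^ 2) / (2 * (μ + 1) ^ 2) := by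
      rw [hl₁, hl₂]; field_simp; ring
    rw [h1, hC2, hA, hDd, ha, hb, hc, hd]
    field_simp
    ring
  -- determinant identity
  have hdet : l₁ * l₂ = A * Dd - B ^ 2 := by
    have h1 : l₁ * l₂ = ((θ ^ 2 - C ^ 2) / (4 * (μ + 1) ^ 2)) ^ 2 := by
      rw [hl₁, hl₂]; field_simp; ring
    rw [h1, hC2, hA, hDd, hB, ha, hb, hc, hd]
    field_simp
    ring
  -- l₁ ≥ l₂
  have hdiff0 : 0 ≤ l₁ - l₂ := by
    have h1 : l₁ - l₂ = θ * C / (μ + 1) ^ 2 := by rw [hl₁, hl₂]; field_simp; ring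
    rw [h1]; positivity
  -- p, q
  have hpq : (l₁ - A) * (l₁ - Dd) = B ^ 2 := by linear_combination l₁ * htr - hdet
  have hsum : 0 ≤ (l₁ - A) + (l₁ - Dd) := by linarith [htr]
  obtain ⟨hp, hq⟩ := pos_aux _ _ _ hsum hpq
  have hl₁0 : 0 ≤ l₁ := by rw [hl₁]; positivity
  have ha' : (0:ℝ) ≤ (θ + C) / (2 * (μ + 1)) := by positivity
  have hl₁a : l₁ = ((θ + C) / (2 * (μ + 1))) ^ 2 := hl₁
  constructor
  · -- spectrum
    rw [hS]
    ext x
    rw [spec2_aux]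
    have key : (x - A) * (x - Dd) - B * B = (x - l₁) * (x - l₂) := by
      linear_combination x * htr - hdet
    rw [key]
    simp only [Set.mem_insert_iff, Set.mem_singleton_iff, mul_eq_zero, sub_eq_zero]
  · -- norm
    set f := Matrix.toEuclideanCLM (𝕜 := ℝ) T with hf
    have hfap : ∀ (x : EuclideanSpace ℝ (Fin 2)),
        f x 0 = a * x 0 + b * x 1 ∧ f x 1 = c * x 0 + d * x 1 := by
      intro x
      constructor <;>
      · rw [hf, hT, clm_apply_aux]
        simp
    have hnormfx : ∀ (x : EuclideanSpace ℝ (Fin 2)),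
        ‖f x‖ = Real.sqrt ((a * x 0 + b * x 1) ^ 2 + (c * x 0 + d * x 1) ^ 2) := by
      intro x
      rw [norm_sq_aux, (hfap x).1, (hfap x).2]
    apply le_antisymm
    · apply ContinuousLinearMap.opNorm_le_bound _ ha'
      intro x
      rw [hnormfx, norm_sq_aux]
      rw [← Real.sqrt_sq ha', ← Real.sqrt_mul (by positivity)]
      apply Real.sqrt_le_sqrt
      have hquad := quad_aux (l₁ - A) (l₁ - Dd) B (x 0) (x 1) hp hq hpq
      have hexp : (a * x 0 + b * x 1) ^ 2 + (c * x 0 + d * x 1) ^ 2 =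
          A * (x 0) ^ 2 + 2 * B * (x 0) * (x 1) + Dd * (x 1) ^ 2 := by
        rw [hA, hB, hDd]; ring
      rw [hexp, ← hl₁a]
      nlinarith [hquad]
    · -- lower bound via eigenvector
      have hmain : ∀ v0 v1 : ℝ, (v0 ≠ 0 ∨ v1 ≠ 0) →
          A * v0 + B * v1 = l₁ * v0 → B * v0 + Dd * v1 = l₁ * v1 →
          (θ + C) / (2 * (μ + 1)) ≤ ‖f‖ := by
        intro v0 v1 hv he1 he2
        set v : EuclideanSpace ℝ (Fin 2) := (WithLp.equiv 2 _).symm ![v0, v1] with hvdef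
        have hv0 : v 0 = v0 := by rw [hvdef]; simp [PiLp.toLp_apply]
        have hv1 : v 1 = v1 := by rw [hvdef]; simp [PiLp.toLp_apply]
        have hnv : ‖v‖ = Real.sqrt (v0 ^ 2 + v1 ^ 2) := by
          rw [norm_sq_aux, hv0, hv1]
        have hvpos : 0 < v0 ^ 2 + v1 ^ 2 := by
          rcases hv with h | h <;> positivity
        have hfv : ‖f v‖ = (θ + C) / (2 * (μ + 1)) * ‖v‖ := by
          rw [hnormfx, hv0, hv1, hnv]
          rw [← Real.sqrt_sq ha', ← Real.sqrt_mul (by positivity)]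
          congr 1
          have : (a * v0 + b * v1) ^ 2 + (c * v0 + d * v1) ^ 2 =
              v0 * (A * v0 + B * v1) + v1 * (B * v0 + Dd * v1) := by
            rw [hA, hB, hDd]; ring
          rw [this, he1, he2, ← hl₁a]
          ring
        have hle := f.le_opNorm v
        rw [hfv] at hle
        have hnvpos : 0 < ‖v‖ := by rw [hnv]; exact Real.sqrt_pos.mpr hvpos
        exact le_of_mul_le_mul_right (by linarith) hnvpos
      by_cases hcase : B = 0 ∧ l₁ - A = 0
      · obtain ⟨hB0, hpA⟩ := hcase
        exact hmain 1 0 (Or.inl one_ne_zero)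
          (by rw [hB0]; linarith) (by rw [hB0]; ring)
      · have hv : B ≠ 0 ∨ l₁ - A ≠ 0 := by tauto
        exact hmain B (l₁ - A) hv (by ring) (by linear_combination -hpq)
end

section
/- Let μ, β ∈ (0,∞) and θ ∈ (0,2), and suppose that none of the following four conditions holds: (a) μβ − μ + β < 0 and θ ≤ 2(β+1)(μ−β−μβ)/(μ+μβ−β−β²−2μβ²); (b) μβ − μ − β > 0 and θ ≤ 2(μ²+β²+μβ+μ+β−μ²β²)/(μ²+β²+μ²β+μβ²+μ+β−2μ²β²); (c) θ ≥ 2(μβ+μ+β)/(2μβ+μ+β); (d) μβ + μ − β < 0 and θ ≤ 2(μ+1)(β−μ−μβ)/(β+μβ−μ−μ²−2μ²β). Set ρ² = ((2−θ)/4)·((2−θ)μ(β+1)+θβ(1−μ))·((2−θ)β(μ+1)+θμ(1−β))/(μβ(2μβ(1−θ)+(2−θ)(μ+β+1))), λ_A = θ·((2−θ)μ(β+1)+θβ(1−μ))/β, λ_B = (θ(2−θ)/β)·((2−θ)μ(β+1)+θβ(1−μ))/(2μβ(1−θ)+(2−θ)(μ+β+1)), K₁ = (β/(4μ))·θ/(2μβ(1−θ)+(2−θ)(μ+β+1)),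 m₁ = −2μ(2(θ−1)μβ+θβ+(θ−2)(μ+1)−2β)/β, m₂ = 2μ((β+1)(θ−2)+βθ)/β, and m₃ = (θ−2) − μ((β+1)(θ−2)+βθ)/β. Then λ_A ≥ 0, λ_B ≥ 0, K₁ ≥ 0, ρ² ≥ 0, and for every real Hilbert space H and all z, z_A, z_B ∈ H the identity ρ²‖z‖² − ‖z − θ(z_B − z_A)‖² − λ_A·(⟨2z_B − z − z_A, z_A⟩ − μ‖z_A‖²) − λ_B·(⟨z − z_B, z_B⟩ − β‖z − z_B‖²) = K₁·‖m₁·z_A + m₂·z_B + m₃·z‖² holds. -/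
open RealInnerProductSpace

lemma norm_comb_sq {H : Type*} [NormedAddCommGroup H] [InnerProductSpace ℝ H]
    (a b c : ℝ) (x y w : H) :
    ‖a • x + b • y + c • w‖ ^ 2 =
      a ^ 2 * ‖x‖ ^ 2 + b ^ 2 * ‖y‖ ^ 2 + c ^ 2 * ‖w‖ ^ 2 +
        2 * a * b * ⟪x, y⟫ + 2 * a * c * ⟪x, w⟫ + 2 * b * c * ⟪y, w⟫ := by
  simp only [← real_inner_self_eq_norm_sq, inner_add_left, inner_add_right,
    real_inner_smul_left, real_inner_smul_right]
  rw [real_inner_comm y x, real_inner_comm w x, real_inner_comm w y]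
  ring

/-- The sum-of-squares certificate for case (e) of the tight contraction factor of
Douglas–Rachford splitting with a maximal `μ`-strongly monotone `A` and a `β`-cocoercive
`B`: the dual multipliers are nonnegative and the sum-of-squares identity holds in every
real Hilbert space. -/
theorem DRS_case_e_sos_certificate
    {H : Type*} [NormedAddCommGroup H] [InnerProductSpace ℝ H] [CompleteSpace H]
    (μ β θ : ℝ) (hμ : 0 < μ) (hβ : 0 < β) (hθ₀ : 0 < θ) (hθ₂ : θ < 2)
    (ha : ¬(μ * β - μ + β < 0 ∧
      θ ≤ 2 * (β + 1) * (μ - β - μ * β) / (μ + μ * β - β - β ^ 2 - 2 * μ * β ^ 2)))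
    (hb : ¬(μ * β - μ - β > 0 ∧
      θ ≤ 2 * (μ ^ 2 + β ^ 2 + μ * β + μ + β - μ ^ 2 * β ^ 2) /
        (μ ^ 2 + β ^ 2 + μ ^ 2 * β + μ * β ^ 2 + μ + β - 2 * μ ^ 2 * β ^ 2)))
    (hc : ¬(θ ≥ 2 * (μ * β + μ + β) / (2 * μ * β + μ + β)))
    (hd : ¬(μ * β + μ - β < 0 ∧
      θ ≤ 2 * (μ + 1) * (β - μ - μ * β) / (β + μ * β - μ - μ ^ 2 - 2 * μ ^ 2 * β)))
    (ρ2 lA lB K₁ m₁ m₂ m₃ : ℝ)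
    (hρ2 : ρ2 = (2 - θ) / 4 *
      (((2 - θ) * μ * (β + 1) + θ * β * (1 - μ)) * ((2 - θ) * β * (μ + 1) + θ * μ * (1 - β)) /
        (μ * β * (2 * μ * β * (1 - θ) + (2 - θ) * (μ + β + 1)))))
    (hlA : lA = θ * ((2 - θ) * μ * (β + 1) + θ * β * (1 - μ)) / β)
    (hlB : lB = θ * (2 - θ) / β *
      (((2 - θ) * μ * (β + 1) + θ * β * (1 - μ)) /
        (2 * μ * β * (1 - θ) + (2 - θ) * (μ + β + 1))))
    (hK₁ : K₁ = β / (4 * μ) * (θ / (2 * μ * β * (1 - θ) + (2 - θ) * (μ + β + 1))))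
    (hm₁ : m₁ = -2 * μ * (2 * (θ - 1) * μ * β + θ * β + (θ - 2) * (μ + 1) - 2 * β) / β)
    (hm₂ : m₂ = 2 * μ * ((β + 1) * (θ - 2) + β * θ) / β)
    (hm₃ : m₃ = (θ - 2) - μ * ((β + 1) * (θ - 2) + β * θ) / β) :
    0 ≤ lA ∧ 0 ≤ lB ∧ 0 ≤ K₁ ∧ 0 ≤ ρ2 ∧
    ∀ (z zA zB : H),
      ρ2 * ‖z‖ ^ 2 - ‖z - θ • (zB - zA)‖ ^ 2 -
          lA * (⟪(2 : ℝ) • zB - z - zA, zA⟫ - μ * ‖zA‖ ^ 2) -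
          lB * (⟪z - zB, zB⟫ - β * ‖z - zB‖ ^ 2) =
        K₁ * ‖m₁ • zA + m₂ • zB + m₃ • z‖ ^ 2 := by
  push_neg at hc
  rw [lt_div_iff₀ (by positivity)] at hc
  have hE : 0 < (2 - θ) * μ * (β + 1) + θ * β * (1 - μ) := by
    nlinarith [mul_pos hμ hβ, mul_pos hθ₀ hβ, sq_nonneg θ, mul_pos (mul_pos hμ hβ) hθ₀]
  have hF : 0 < (2 - θ) * β * (μ + 1) + θ * μ * (1 - β) := by
    nlinarith [mul_pos hμ hβ, mul_pos hθ₀ hμ, sq_nonneg θ, mul_pos (mul_pos hμ hβ) hθ₀]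
  have hD : 0 < 2 * μ * β * (1 - θ) + (2 - θ) * (μ + β + 1) := by nlinarith
  refine ⟨?_, ?_, ?_, ?_, ?_⟩
  · rw [hlA]
    exact div_nonneg (mul_nonneg hθ₀.le hE.le) hβ.le
  · rw [hlB]
    exact mul_nonneg (div_nonneg (mul_nonneg hθ₀.le (by linarith)) hβ.le)
      (div_nonneg hE.le hD.le)
  · rw [hK₁]
    exact mul_nonneg (div_nonneg hβ.le (by linarith)) (div_nonneg hθ₀.le hD.le)
  · rw [hρ2]
    exact mul_nonneg (by linarith) (div_nonneg (mul_nonneg hE.le hF.le)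
      (mul_nonneg (mul_nonneg hμ.le hβ.le) hD.le))
  · intro z zA zB
    have h1 : z - θ • (zB - zA) = θ • zA + (-θ) • zB + (1 : ℝ) • z := by module
    rw [h1, norm_comb_sq, norm_comb_sq, norm_sub_sq_real z zB]
    simp only [inner_sub_left, real_inner_smul_left]
    simp only [real_inner_self_eq_norm_sq]
    rw [real_inner_comm zB zA, real_inner_comm z zA, real_inner_comm z zB]
    subst hρ2 hlA hlB hK₁ hm₁ hm₂ hm₃
    field_simp
    ring
end
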